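/- Let n ≥ 2 and n ≥ m ≥ 1 be integers. If k ≥ 1 is odd, then r(S_n^m; k) ≥ k(n−1) + m + 2. -/

import Mathlib

open SimpleGraph

/-- The double star `S(n,m)`: two adjacent centers `0` and `1`, with `n` leaves
attached to `0` (vertices `2,…,n+1`) and `m` leaves attached to `1`
(vertices `n+2,…,n+m+1`). -/
def doubleStar (n m : ℕ) : SimpleGraph (Fin (n + m + 2)) :=
  SimpleGraph.fromRel (fun u v =>
    (u.val = 0 ∧ v.val = 1) ∨
    (u.val = 0 ∧ 2 ≤ v.val ∧ v.val ≤ n + 1) ∨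
    (u.val = 1 ∧ n + 2 ≤ v.val))

/-- The star `K_{1,n}` with center `0` and `n` leaves. -/
def starGraph (n : ℕ) : SimpleGraph (Fin (n + 1)) :=
  SimpleGraph.fromRel (fun u _ => u.val = 0)

/-- The subdivided star `S_n^m`, obtained from `K_{1,n}` by subdividing `m` edges each
exactly once: center `0`; subdivision vertices `1,…,m`; for `1 ≤ i ≤ m` the vertex `m+i`
is the leaf beyond subdivision vertex `i`; vertices `2m+1,…,n+m` are ordinary leaves. -/
def subdividedStar (n m : ℕ) : SimpleGraph (Fin (n + m + 1)) :=
  SimpleGraph.fromRel (fun u v =>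
    (u.val = 0 ∧ 1 ≤ v.val ∧ v.val ≤ m) ∨
    (1 ≤ u.val ∧ u.val ≤ m ∧ v.val = u.val + m) ∨
    (u.val = 0 ∧ 2 * m + 1 ≤ v.val))

/-- `K_N` colored by `c` with `k` colors contains a monochromatic copy of `H`. -/
def HasMonoCopy {W : Type} (H : SimpleGraph W) {N : ℕ} {α : Type}
    (c : Sym2 (Fin N) → α) : Prop :=
  ∃ (f : W ↪ Fin N) (i : α), ∀ v w : W, H.Adj v w → c s(f v, f w) = i

/-- Every `k`-coloring of the edges of `K_N` contains a monochromatic copy of `H`. -/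
def IsRamsey {W : Type} (H : SimpleGraph W) (k N : ℕ) : Prop :=
  ∀ c : Sym2 (Fin N) → Fin k, HasMonoCopy H c

/-- The `k`-color Ramsey number of `H`. -/
noncomputable def ramseyNumber {W : Type} (H : SimpleGraph W) (k : ℕ) : ℕ :=
  sInf {N | IsRamsey H k N}

/-- There is a list assignment of `k` colors to each edge of `K_N` such that every
coloring from the lists contains a monochromatic copy of `H`. -/
def IsListRamsey {W : Type} (H : SimpleGraph W) (k N : ℕ) : Prop :=
  ∃ L : Sym2 (Fin N) → Finset ℕ, (∀ e, (L e).card = k) ∧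
    ∀ c : Sym2 (Fin N) → ℕ, (∀ e, c e ∈ L e) → HasMonoCopy H c

/-- The `k`-color list Ramsey number of `H`. -/
noncomputable def listRamseyNumber {W : Type} (H : SimpleGraph W) (k : ℕ) : ℕ :=
  sInf {N | IsListRamsey H k N}


section MinDeg

variable {V : Type} [DecidableEq V] [Fintype V]

def esum (A : V → V → Prop) [DecidableRel A] (s : Finset V) : ℕ :=
  ∑ v ∈ s, (s.filter (A v)).card

set_option linter.unusedSectionVars false

lemma esum_erase (A : V → V → Prop) [DecidableRel A]
    (hsym : ∀ u v, A u v → A v u) (hirr : ∀ v, ¬ A v v)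
    (s : Finset V) (v₀ : V) (hv₀ : v₀ ∈ s) :
    esum A s = esum A (s.erase v₀) + 2 * ((s.erase v₀).filter (A v₀)).card := by
  classical
  set s' := s.erase v₀ with hs'
  have hins : s = insert v₀ s' := by
    rw [hs', Finset.insert_erase hv₀]
  have hv₀s' : v₀ ∉ s' := Finset.notMem_erase _ _
  have hcard : ∀ v : V, (s.filter (A v)).card
      = (s'.filter (A v)).card + (if A v v₀ then 1 else 0) := by
    intro v
    rw [hins, Finset.filter_insert]
    split_ifs with h
    · rw [Finset.card_insert_of_notMem (by simp [hv₀s'])]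
    · rfl
  have h1 : esum A s = (s.filter (A v₀)).card + ∑ v ∈ s', (s.filter (A v)).card := by
    rw [esum, ← Finset.add_sum_erase _ _ hv₀]
  have h2 : ∑ v ∈ s', (s.filter (A v)).card
      = esum A s' + ∑ v ∈ s', (if A v v₀ then 1 else 0) := by
    rw [esum, ← Finset.sum_add_distrib]
    exact Finset.sum_congr rfl fun v _ => hcard v
  have h3 : ∑ v ∈ s', (if A v v₀ then 1 else 0) = (s'.filter (A v₀)).card := by
    rw [Finset.card_filter]
    exact Finset.sum_congr rfl fun v _ => by
      by_cases h : A v v₀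
      · simp [h, hsym _ _ h]
      · have : ¬ A v₀ v := fun h' => h (hsym _ _ h')
        simp [h, this]
  have h4 : (s.filter (A v₀)).card = (s'.filter (A v₀)).card := by
    rw [hcard v₀, if_neg (hirr v₀)]
    omega
  omega

lemma exists_min_degree_subset (A : V → V → Prop) [DecidableRel A]
    (hsym : ∀ u v, A u v → A v u) (hirr : ∀ v, ¬ A v v) (d : ℕ) :
    ∀ s : Finset V, (2*d - 2) * s.card < esum A s →
      ∃ t : Finset V, t ⊆ s ∧ t.Nonempty ∧ ∀ v ∈ t, d ≤ (t.filter (A v)).card := by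
  classical
  intro s
  induction s using Finset.strongInductionOn with
  | _ s ih =>
    intro hbig
    have hne : s.Nonempty := by
      rcases s.eq_empty_or_nonempty with h | h
      · subst h; simp [esum] at hbig
      · exact h
    by_cases hall : ∀ v ∈ s, d ≤ (s.filter (A v)).card
    · exact ⟨s, subset_rfl, hne, hall⟩
    · push_neg at hall
      obtain ⟨v₀, hv₀, hdeg⟩ := hall
      have key := esum_erase A hsym hirr s v₀ hv₀
      have hdeg' : ((s.erase v₀).filter (A v₀)).card < d := by
        calc ((s.erase v₀).filter (A v₀)).card ≤ (s.filter (A v₀)).card :=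
          Finset.card_le_card (Finset.filter_subset_filter _ (Finset.erase_subset _ _))
        _ < d := hdeg
      have hcard : s.card = (s.erase v₀).card + 1 := by
        rw [Finset.card_erase_of_mem hv₀]
        have := Finset.card_pos.mpr hne
        omega
      have hrec : (2*d - 2) * (s.erase v₀).card < esum A (s.erase v₀) := by
        have hd1 : 1 ≤ d := by
          by_contra h
          have : d = 0 := by omega
          subst this
          simp at hbig
          omega
        have hmul : (2*d-2)*s.card = (2*d-2)*(s.erase v₀).card + (2*d - 2) := by
          rw [hcard]; ring
        omega
      obtain ⟨t, hts, htne, ht⟩ := ih _ (Finset.erase_ssubset hv₀) hrec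
      exact ⟨t, hts.trans (Finset.erase_subset _ _), htne, ht⟩

lemma exists_injective_choice (M : ℕ) :
    ∀ (C : Fin M → Finset V) (F : Finset V),
    (∀ j, F.card + M ≤ (C j).card) →
    ∃ y : Fin M → V, Function.Injective y ∧ (∀ j, y j ∈ C j) ∧ ∀ j, y j ∉ F := by
  induction M with
  | zero =>
    intro C F _
    exact ⟨Fin.elim0, fun a => a.elim0, fun j => j.elim0, fun j => j.elim0⟩
  | succ M ih =>
    intro C F hC
    have hlast : ((C (Fin.last M)) \ F).Nonempty := by
      have h1 := hC (Fin.last M)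
      have h2 : (C (Fin.last M) \ F).card + F.card ≥ (C (Fin.last M)).card := by
        have := Finset.card_le_card_sdiff_add_card (s := C (Fin.last M)) (t := F)
        omega
      rw [← Finset.card_pos]
      omega
    obtain ⟨z, hz⟩ := hlast
    rw [Finset.mem_sdiff] at hz
    obtain ⟨y', hinj', hmem', hF'⟩ := ih (fun j => C j.castSucc) (insert z F)
      (fun j => by
        show (insert z F).card + M ≤ (C j.castSucc).card
        have h1 := hC j.castSucc
        have h2 : (insert z F).card ≤ F.card + 1 := Finset.card_insert_le _ _
        omega)
    refine ⟨Fin.lastCases z y', ?_, ?_, ?_⟩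
    · intro a b hab
      rcases Fin.eq_castSucc_or_eq_last a with ⟨a', rfl⟩ | rfl <;>
        rcases Fin.eq_castSucc_or_eq_last b with ⟨b', rfl⟩ | rfl
      · simp only [Fin.lastCases_castSucc] at hab
        exact congrArg _ (hinj' hab)
      · simp only [Fin.lastCases_castSucc, Fin.lastCases_last] at hab
        exact absurd (hab ▸ Finset.mem_insert_self z F) (hF' a')
      · simp only [Fin.lastCases_castSucc, Fin.lastCases_last] at hab
        exact absurd (hab ▸ Finset.mem_insert_self z F) (hF' b')
      · rfl
    · intro j
      rcases Fin.eq_castSucc_or_eq_last j with ⟨j', rfl⟩ | rfl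
      · simpa [Fin.lastCases_castSucc] using hmem' j'
      · simpa [Fin.lastCases_last] using hz.1
    · intro j
      rcases Fin.eq_castSucc_or_eq_last j with ⟨j', rfl⟩ | rfl
      · simp only [Fin.lastCases_castSucc]
        exact fun h => hF' j' (Finset.mem_insert_of_mem h)
      · simpa [Fin.lastCases_last] using hz.2

end MinDeg

section Big

/-- The color-`i` adjacency relation of the coloring `c`. -/
def Arel {k N : ℕ} (c : Sym2 (Fin N) → Fin k) (i : Fin k) : Fin N → Fin N → Prop :=
  fun x y => x ≠ y ∧ c s(x, y) = i

instance {k N : ℕ} (c : Sym2 (Fin N) → Fin k) (i : Fin k) : DecidableRel (Arel c i) :=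
  fun _ _ => instDecidableAnd

lemma Arel_symm {k N : ℕ} (c : Sym2 (Fin N) → Fin k) (i : Fin k) :
    ∀ u v, Arel c i u v → Arel c i v u := by
  intro u v ⟨h1, h2⟩
  exact ⟨h1.symm, by rwa [Sym2.eq_swap]⟩

lemma Arel_irrefl {k N : ℕ} (c : Sym2 (Fin N) → Fin k) (i : Fin k) :
    ∀ v, ¬ Arel c i v v := fun _ h => h.1 rfl

lemma hasMonoCopy_big (n m k N : ℕ) (hn : 2 ≤ n) (hnm : m ≤ n) (hm : 1 ≤ m) (hk : 1 ≤ k)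
    (hNN : 2*k*(n+m)+2 ≤ N) (c : Sym2 (Fin N) → Fin k) :
    HasMonoCopy (subdividedStar n m) c := by
  classical
  have hN0 : 0 < N := by omega
  -- double counting
  have hrow : ∀ v : Fin N, ∑ i : Fin k, ((Finset.univ.filter (Arel c i v)).card) = N - 1 := by
    intro v
    have hmap : ∀ u ∈ Finset.univ.filter (fun u => v ≠ u), c s(v, u) ∈ (Finset.univ : Finset (Fin k)) :=
      fun u _ => Finset.mem_univ _
    have := Finset.card_eq_sum_card_fiberwise hmap
    have heq : ∀ i : Fin k,
        ((Finset.univ.filter (fun u => v ≠ u)).filter (fun u => c s(v,u) = i))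
          = Finset.univ.filter (Arel c i v) := by
      intro i
      rw [Finset.filter_filter]
      exact Finset.filter_congr fun u _ => Iff.rfl
    rw [Finset.filter_ne] at this
    rw [Finset.card_erase_of_mem (Finset.mem_univ v), Finset.card_univ, Fintype.card_fin] at this
    rw [this]
    exact Finset.sum_congr rfl fun i _ => by rw [← heq i, Finset.filter_ne]
  have htotal : ∑ i : Fin k, esum (Arel c i) Finset.univ = N * (N-1) := by
    have : ∑ i : Fin k, esum (Arel c i) Finset.univ
        = ∑ v : Fin N, ∑ i : Fin k, ((Finset.univ.filter (Arel c i v)).card) := by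
      rw [Finset.sum_comm]
      rfl
    rw [this]
    rw [Finset.sum_congr rfl fun v _ => hrow v]
    simp [Finset.card_univ, mul_comm]
  have hbig : ∃ i : Fin k, (2*(n+m)) * N < esum (Arel c i) Finset.univ := by
    by_contra h
    push_neg at h
    have hsum : ∑ i : Fin k, esum (Arel c i) Finset.univ ≤ k * ((2*(n+m)) * N) := by
      calc ∑ i : Fin k, esum (Arel c i) Finset.univ ≤ ∑ _i : Fin k, (2*(n+m)) * N :=
            Finset.sum_le_sum fun i _ => h i
        _ = k * ((2*(n+m)) * N) := by simp [Finset.sum_const, Finset.card_univ, mul_comm]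
    rw [htotal] at hsum
    have h2 : 2*k*(n+m) + 1 ≤ N - 1 := by omega
    have h3 : N * (2*k*(n+m) + 1) ≤ N * (N-1) := Nat.mul_le_mul_left _ h2
    nlinarith [hN0]
  obtain ⟨i, hi⟩ := hbig
  have h2d : (2*(n+m+1) - 2) * (Finset.univ : Finset (Fin N)).card < esum (Arel c i) Finset.univ := by
    have : (2*(n+m+1) - 2) = 2*(n+m) := by omega
    rw [this, Finset.card_univ, Fintype.card_fin]
    exact hi
  obtain ⟨t, -, htne, hmin⟩ :=
    exists_min_degree_subset (Arel c i) ((Arel_symm c i)) ((Arel_irrefl c i)) (n+m+1) Finset.univ h2d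
  obtain ⟨v₀, hv₀⟩ := htne
  set Nb := t.filter (Arel c i v₀) with hNb
  have hNbcard : n + m + 1 ≤ Nb.card := hmin v₀ hv₀
  obtain ⟨X, hXsub, hXcard⟩ := Finset.exists_subset_card_eq (s := Nb) (n := n) (by omega)
  let x : Fin n → Fin N := fun j => (X.orderIsoOfFin hXcard j : Fin N)
  have hxinj : Function.Injective x := fun a b hab => by
    have := (X.orderIsoOfFin hXcard).injective (Subtype.ext hab)
    exact this
  have hxNb : ∀ j, x j ∈ Nb := fun j => hXsub (X.orderIsoOfFin hXcard j).2
  have hxA : ∀ j, Arel c i v₀ (x j) := fun j => (Finset.mem_filter.1 (hxNb j)).2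
  have hxt : ∀ j, x j ∈ t := fun j => (Finset.mem_filter.1 (hxNb j)).1
  -- ℕ-indexed versions
  have hn0 : 0 < n := by omega
  have hm0 : 0 < m := by omega
  let x' : ℕ → Fin N := fun s => x ⟨s % n, Nat.mod_lt _ hn0⟩
  have hx'A : ∀ s, Arel c i v₀ (x' s) := fun s => hxA _
  have hx't : ∀ s, x' s ∈ t := fun s => hxt _
  have hx'inj : ∀ a b, a < n → b < n → x' a = x' b → a = b := by
    intro a b ha hb hab
    have := hxinj hab
    rw [Fin.mk.injEq, Nat.mod_eq_of_lt ha, Nat.mod_eq_of_lt hb] at this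
    exact this
  let C : Fin m → Finset (Fin N) := fun j => t.filter (Arel c i (x' j.val))
  let F : Finset (Fin N) := insert v₀ (Finset.image x' (Finset.range n))
  have hFcard : F.card ≤ n + 1 := by
    calc F.card ≤ (Finset.image x' (Finset.range n)).card + 1 := Finset.card_insert_le _ _
      _ ≤ n + 1 := by
          have := Finset.card_image_le (s := Finset.range n) (f := x')
          rw [Finset.card_range] at this
          omega
  have hCcard : ∀ j, F.card + m ≤ (C j).card := by
    intro j
    have := hmin (x' j.val) (hx't j.val)
    show F.card + m ≤ (t.filter (Arel c i (x' j.val))).card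
    omega
  obtain ⟨y, hyinj, hymem, hyF⟩ := exists_injective_choice m C F hCcard
  let y' : ℕ → Fin N := fun s => y ⟨s % m, Nat.mod_lt _ hm0⟩
  have hy'inj : ∀ a b, a < m → b < m → y' a = y' b → a = b := by
    intro a b ha hb hab
    have := hyinj hab
    rw [Fin.mk.injEq, Nat.mod_eq_of_lt ha, Nat.mod_eq_of_lt hb] at this
    exact this
  have hy'A : ∀ s, s < m → Arel c i (x' s) (y' s) := by
    intro s hs
    have := hymem ⟨s, hs⟩
    have hy : (y ⟨s, hs⟩) ∈ t.filter (Arel c i (x' s)) := by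
      have : (⟨s, hs⟩ : Fin m).val = s := rfl
      exact hymem ⟨s, hs⟩
    have h2 := (Finset.mem_filter.1 hy).2
    have : y' s = y ⟨s, hs⟩ := by
      show y ⟨s % m, _⟩ = y ⟨s, hs⟩
      congr 1
      exact Fin.ext (Nat.mod_eq_of_lt hs)
    rw [this]
    exact h2
  have hy'F : ∀ s, s < m → y' s ∉ F := by
    intro s hs
    have : y' s = y ⟨s, hs⟩ := by
      show y ⟨s % m, _⟩ = y ⟨s, hs⟩
      congr 1
      exact Fin.ext (Nat.mod_eq_of_lt hs)
    rw [this]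
    exact hyF ⟨s, hs⟩
  -- facts about distinctness
  have hv₀x : ∀ s, v₀ ≠ x' s := fun s => (hx'A s).1
  have hv₀y : ∀ s, s < m → v₀ ≠ y' s := by
    intro s hs heq
    exact (hy'F s hs) (heq ▸ Finset.mem_insert_self _ _)
  have hxy : ∀ a b, b < m → x' a ≠ y' b := by
    intro a b hb heq
    apply hy'F b hb
    rw [← heq]
    exact Finset.mem_insert_of_mem (Finset.mem_image.2 ⟨a % n, Finset.mem_range.2 (Nat.mod_lt _ hn0), by
      show x ⟨a % n % n, _⟩ = x ⟨a % n, _⟩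
      congr 1
      exact Fin.ext (Nat.mod_mod_of_dvd a dvd_rfl)⟩)
  -- the embedding
  let g : Fin (n+m+1) → Fin N := fun w =>
    if w.val = 0 then v₀
    else if w.val ≤ m then x' (w.val - 1)
    else if w.val ≤ 2*m then y' (w.val - (m+1))
    else x' (w.val - (m+1))
  have hginj : Function.Injective g := by
    intro a b hab
    unfold g at hab
    beta_reduce at hab
    apply Fin.ext
    have ha' := a.isLt
    have hb' := b.isLt
    split_ifs at hab with h1 h2 h3 h4 h5 h6 h7 h8 h9 h10 h11 h12 h13 h14 h15 h16 <;>
    first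
      | omega
      | (exact absurd hab (hv₀x _))
      | (exact absurd hab (hv₀y _ (by omega)))
      | (exact absurd hab.symm (hv₀x _))
      | (exact absurd hab.symm (hv₀y _ (by omega)))
      | (exact absurd hab (hxy _ _ (by omega)))
      | (exact absurd hab.symm (hxy _ _ (by omega)))
      | (have := hx'inj _ _ (by omega) (by omega) hab; omega)
      | (have := hy'inj _ _ (by omega) (by omega) hab; omega)
  -- monochromatic
  have key : ∀ v w : Fin (n+m+1),
      ((v.val = 0 ∧ 1 ≤ w.val ∧ w.val ≤ m) ∨
       (1 ≤ v.val ∧ v.val ≤ m ∧ w.val = v.val + m) ∨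
       (v.val = 0 ∧ 2 * m + 1 ≤ w.val)) → c s(g v, g w) = i := by
    intro v w hrel
    have hw' := w.isLt
    rcases hrel with ⟨hv0, hw1, hwm⟩ | ⟨hv1, hvm, hw⟩ | ⟨hv0, hw2⟩
    · have hgv : g v = v₀ := by unfold g; beta_reduce; rw [if_pos hv0]
      have hgw : g w = x' (w.val - 1) := by
        unfold g; beta_reduce; rw [if_neg (by omega), if_pos hwm]
      rw [hgv, hgw]
      exact (hx'A _).2
    · have hgv : g v = x' (v.val - 1) := by
        unfold g; beta_reduce; rw [if_neg (by omega), if_pos hvm]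
      have hgw : g w = y' (v.val - 1) := by
        unfold g; beta_reduce; rw [if_neg (by omega), if_neg (by omega), if_pos (by omega)]
        congr 1
        omega
      rw [hgv, hgw]
      exact (hy'A _ (by omega)).2
    · have hgv : g v = v₀ := by unfold g; beta_reduce; rw [if_pos hv0]
      have hgw : g w = x' (w.val - (m+1)) := by
        unfold g; beta_reduce; rw [if_neg (by omega), if_neg (by omega), if_neg (by omega)]
      rw [hgv, hgw]
      exact (hx'A _).2
  refine ⟨⟨g, hginj⟩, i, ?_⟩
  intro v w hadj
  rw [subdividedStar, SimpleGraph.fromRel_adj] at hadj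
  obtain ⟨hne, hrel | hrel⟩ := hadj
  · exact key v w hrel
  · show c s(g v, g w) = i
    rw [Sym2.eq_swap]
    exact key w v hrel

lemma isRamsey_big (n m k : ℕ) (hn : 2 ≤ n) (hnm : m ≤ n) (hm : 1 ≤ m) (hk : 1 ≤ k) :
    IsRamsey (subdividedStar n m) k (2*k*(n+m)+2) :=
  fun c => hasMonoCopy_big n m k _ hn hnm hm hk le_rfl c

end Big

section Construction

/-- Row index of a vertex: `v / (n-1)` for the first `k*(n-1)` vertices, `k` for the rest. -/
def rowOf (n k v : ℕ) : ℕ := if v < k*(n-1) then v / (n-1) else k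

/-- The color (as a natural number) assigned to a pair of vertices in rows `a`, `b`. -/
def colRho (k a b : ℕ) : ℕ :=
  if a = k ∧ b = k then 0
  else if a = k then b
  else if b = k then a
  else if a = b then a
  else ((a + b) * ((k+1)/2)) % k

lemma rowOf_le (n k v : ℕ) (hn : 2 ≤ n) : rowOf n k v ≤ k := by
  unfold rowOf
  split_ifs with hv
  · have := (Nat.div_lt_iff_lt_mul (show 0 < n-1 by omega)).mpr hv
    omega
  · omega

lemma rowOf_lt_imp (n k v t : ℕ) (hn : 2 ≤ n) (ht : t < k) (h : rowOf n k v = t) :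
    t*(n-1) ≤ v ∧ v < (t+1)*(n-1) ∧ v < k*(n-1) := by
  unfold rowOf at h
  split_ifs at h with hv
  · have h1 : (v/(n-1))*(n-1) ≤ v := Nat.div_mul_le_self _ _
    have h2 : v < (v/(n-1) + 1)*(n-1) :=
      (Nat.div_lt_iff_lt_mul (show 0 < n-1 by omega)).mp (Nat.lt_succ_self _)
    rw [h] at h1 h2
    exact ⟨h1, h2, hv⟩
  · omega

lemma rowOf_eq_k_imp (n k v : ℕ) (hn : 2 ≤ n) (hk : 0 < k) (h : rowOf n k v = k) :
    k*(n-1) ≤ v := by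
  unfold rowOf at h
  split_ifs at h with hv
  · have := (Nat.div_lt_iff_lt_mul (show 0 < n-1 by omega)).mpr hv
    omega
  · omega

lemma colRho_lt (k a b : ℕ) (hk : 0 < k) (ha : a ≤ k) (hb : b ≤ k) : colRho k a b < k := by
  unfold colRho
  split_ifs with h1 h2 h3 h4
  · omega
  · omega
  · omega
  · omega
  · exact Nat.mod_lt _ hk

lemma colRho_symm (k a b : ℕ) : colRho k a b = colRho k b a := by
  unfold colRho
  split_ifs <;> first | omega | rw [Nat.add_comm a b]

lemma mod_inv_lemma (k a b i : ℕ) (hodd : Odd k) (ha : a < k) (hb : b < k) (hi : i < k)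
    (h : ((a + b) * ((k+1)/2)) % k = i) : b = (2*i + (k - a)) % k := by
  obtain ⟨j, hj⟩ := hodd
  have hinv : (k+1)/2 * 2 = k + 1 := by omega
  have h1 : (a+b)*((k+1)/2) ≡ i [MOD k] := by
    show (a+b)*((k+1)/2) % k = i % k
    rw [h, Nat.mod_eq_of_lt hi]
  have h2 : (a+b)*((k+1)/2)*2 ≡ i*2 [MOD k] := h1.mul_right 2
  have h3 : (a+b)*((k+1)/2)*2 = (a+b) + (a+b)*k := by
    rw [mul_assoc, hinv]; ring
  rw [h3] at h2
  have h5 : (a+b) + (a+b)*k ≡ (a+b) [MOD k] := by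
    show ((a+b) + (a+b)*k) % k = (a+b) % k
    exact Nat.add_mul_mod_self_right _ _ _
  have h6 : (a+b) ≡ i*2 [MOD k] := h5.symm.trans h2
  have h7 : (a+b) + (k - a) ≡ i*2 + (k-a) [MOD k] := h6.add_right _
  have h8 : (a+b) + (k-a) = b + k := by omega
  rw [h8] at h7
  have h9 : b ≡ b + k [MOD k] := by
    show b % k = (b + k) % k
    rw [Nat.add_mod_right]
  have h10 : b ≡ 2*i + (k - a) [MOD k] := by
    have := h9.trans h7
    have h11 : i*2 = 2*i := by ring
    rwa [h11] at this
  calc b = b % k := (Nat.mod_eq_of_lt hb).symm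
    _ = (2*i + (k - a)) % k := h10

lemma colRho_step (k a b i : ℕ) (hodd : Odd k) (hk : 0 < k) (ha : a ≤ k) (hb : b ≤ k)
    (hi : i < k) (hP : a = i ∨ a = k) (h : colRho k a b = i) : b = i ∨ b = k := by
  unfold colRho at h
  split_ifs at h with h1 h2 h3 h4
  · right; exact h1.2
  · left; omega
  · right; exact h3
  · left; omega
  · exfalso
    have ha' : a = i := by
      rcases hP with h'|h'
      · exact h'
      · exact absurd h' h2
    have hmb := mod_inv_lemma k a b i hodd (by omega) (by omega) hi h
    have he : (2*i + (k - a)) = i + k := by omega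
    rw [he, Nat.add_mod_right, Nat.mod_eq_of_lt hi] at hmb
    omega

lemma colRho_low (k a b i : ℕ) (hodd : Odd k) (hk : 0 < k) (ha : a < k) (hb : b ≤ k)
    (hi : i < k) (hne : a ≠ i) (h : colRho k a b = i) : b = (2*i + (k - a)) % k := by
  unfold colRho at h
  split_ifs at h with h1 h2 h3 h4
  · exact absurd h1.1 (by omega)
  · exact absurd h2 (by omega)
  · exact absurd h (by omega)
  · exact absurd h (by omega)
  · exact mod_inv_lemma k a b i hodd ha (by omega) hi h

/-- The extremal coloring of `K_{k(n-1)+m+1}`. -/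
def consColor (n m k : ℕ) (hn : 2 ≤ n) (hk : 0 < k) : Sym2 (Fin (k*(n-1)+m+1)) → Fin k :=
  Sym2.lift ⟨fun x y => ⟨colRho k (rowOf n k x.val) (rowOf n k y.val),
      colRho_lt k _ _ hk (rowOf_le n k x.val hn) (rowOf_le n k y.val hn)⟩,
    fun x y => Fin.ext (colRho_symm k _ _)⟩

lemma consColor_apply (n m k : ℕ) (hn : 2 ≤ n) (hk : 0 < k) (x y : Fin (k*(n-1)+m+1)) :
    ((consColor n m k hn hk) s(x, y)).val = colRho k (rowOf n k x.val) (rowOf n k y.val) := by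
  rfl

end Construction

section Refute

lemma not_isRamsey (n m k : ℕ) (hn : 2 ≤ n) (hnm : m ≤ n) (hm : 1 ≤ m) (hk : 1 ≤ k)
    (hodd : Odd k) : ¬ IsRamsey (subdividedStar n m) k (k*(n-1)+m+1) := by
  intro hR
  obtain ⟨f, i, hf⟩ := hR (consColor n m k hn (by omega))
  -- restated monochromaticity at the level of `colRho`
  have hcol : ∀ v w : Fin (n+m+1), (subdividedStar n m).Adj v w →
      colRho k (rowOf n k (f v).val) (rowOf n k (f w).val) = i.val := by
    intro v w h
    have := hf v w h
    have h2 := congrArg Fin.val this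
    rwa [consColor_apply] at h2
  -- adjacency facts
  have hadj01 : ∀ (j : ℕ) (hj : j < n+m+1), 1 ≤ j → j ≤ m →
      (subdividedStar n m).Adj ⟨0, by omega⟩ ⟨j, hj⟩ := by
    intro j hj h1 h2
    rw [subdividedStar, SimpleGraph.fromRel_adj]
    refine ⟨?_, Or.inl (Or.inl ⟨rfl, h1, h2⟩)⟩
    intro hEq
    have := congrArg Fin.val hEq
    simp at this
    omega
  have hadj03 : ∀ (j : ℕ) (hj : j < n+m+1), 2*m+1 ≤ j →
      (subdividedStar n m).Adj ⟨0, by omega⟩ ⟨j, hj⟩ := by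
    intro j hj h1
    rw [subdividedStar, SimpleGraph.fromRel_adj]
    refine ⟨?_, Or.inl (Or.inr (Or.inr ⟨rfl, h1⟩))⟩
    intro hEq
    have := congrArg Fin.val hEq
    simp at this
    omega
  have hadj2 : ∀ (j : ℕ) (hj : j < n+m+1) (hj' : j+m < n+m+1), 1 ≤ j → j ≤ m →
      (subdividedStar n m).Adj ⟨j, hj⟩ ⟨j+m, hj'⟩ := by
    intro j hj hj' h1 h2
    rw [subdividedStar, SimpleGraph.fromRel_adj]
    refine ⟨?_, Or.inl (Or.inr (Or.inl ⟨h1, h2, rfl⟩))⟩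
    intro hEq
    have := congrArg Fin.val hEq
    simp at this
    omega
  have hrowle : ∀ v : Fin (k*(n-1)+m+1), rowOf n k v.val ≤ k :=
    fun v => rowOf_le n k v.val hn
  by_cases hcase : rowOf n k (f ⟨0, by omega⟩).val = i.val ∨ rowOf n k (f ⟨0, by omega⟩).val = k
  · -- case (a) : the whole copy lives in the block `row i ∪ A` of size `n+m`
    have hstep : ∀ v w : Fin (n+m+1), (subdividedStar n m).Adj v w →
        (rowOf n k (f v).val = i.val ∨ rowOf n k (f v).val = k) →
        (rowOf n k (f w).val = i.val ∨ rowOf n k (f w).val = k) := by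
      intro v w hA hP
      exact colRho_step k _ _ i.val hodd (by omega) (hrowle (f v)) (hrowle (f w))
        i.isLt hP (hcol v w hA)
    have hP : ∀ w : Fin (n+m+1),
        (rowOf n k (f w).val = i.val ∨ rowOf n k (f w).val = k) := by
      intro w
      obtain ⟨j, hj⟩ := w
      by_cases hj0 : j = 0
      · subst hj0; exact hcase
      · by_cases hjm : j ≤ m
        · exact hstep _ _ (hadj01 j hj (by omega) hjm) hcase
        · by_cases hj2m : j ≤ 2*m
          · have hPrev := hstep _ _ (hadj01 (j-m) (by omega) (by omega) (by omega)) hcase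
            have hAdj := hadj2 (j-m) (by omega) (by omega) (by omega) (by omega)
            have hEq : (⟨j-m+m, by omega⟩ : Fin (n+m+1)) = ⟨j, hj⟩ := by
              apply Fin.ext; simp; omega
            rw [hEq] at hAdj
            exact hstep _ _ hAdj hPrev
          · exact hstep _ _ (hadj03 j hj (by omega)) hcase
    -- encode all the n+m+1 vertices into a set of size n+m
    have hexp : (i.val+1)*(n-1) = i.val*(n-1) + (n-1) := by ring
    have hlow : ∀ w, (f w).val < k*(n-1) →
        i.val*(n-1) ≤ (f w).val ∧ (f w).val < i.val*(n-1) + (n-1) := by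
      intro w h
      have hPw := hP w
      have hrow : rowOf n k (f w).val = i.val := by
        rcases hPw with h'|h'
        · exact h'
        · exact absurd (rowOf_eq_k_imp n k (f w).val hn (by omega) h') (by omega)
      have := rowOf_lt_imp n k (f w).val i.val hn i.isLt hrow
      omega
    let e2 : Fin (n+m+1) → Fin (n+m) := fun w =>
      if h : (f w).val < k*(n-1) then
        ⟨(f w).val - i.val*(n-1), by have := hlow w h; omega⟩
      else
        ⟨(n-1) + ((f w).val - k*(n-1)), by
          have := (f w).isLt
          omega⟩
    have he2 : Function.Injective e2 := by
      intro a b hab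
      unfold e2 at hab
      beta_reduce at hab
      have hfab : (f a).val = (f b).val := by
        by_cases h1 : (f a).val < k*(n-1) <;> by_cases h2 : (f b).val < k*(n-1)
        · rw [dif_pos h1, dif_pos h2, Fin.mk.injEq] at hab
          have := hlow a h1; have := hlow b h2; omega
        · rw [dif_pos h1, dif_neg h2, Fin.mk.injEq] at hab
          have := hlow a h1; omega
        · rw [dif_neg h1, dif_pos h2, Fin.mk.injEq] at hab
          have := hlow b h2; omega
        · rw [dif_neg h1, dif_neg h2, Fin.mk.injEq] at hab
          omega
      exact f.injective (Fin.ext hfab)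
    have hcard := Fintype.card_le_of_injective e2 he2
    simp only [Fintype.card_fin] at hcard
    omega
  · -- case (b) : the center is in a bipartite component, its n neighbours all
    -- lie in a single row of size n-1
    push_neg at hcase
    obtain ⟨hne_i, hne_k⟩ := hcase
    have ha0lt : rowOf n k (f ⟨0, by omega⟩).val < k := by
      have := hrowle (f ⟨0, by omega⟩); omega
    set a0 := rowOf n k (f ⟨0, by omega⟩).val with ha0
    set j' := (2*i.val + (k - a0)) % k with hj'def
    have hj'lt : j' < k := Nat.mod_lt _ (by omega)
    have hnb : ∀ w : Fin (n+m+1), (subdividedStar n m).Adj ⟨0, by omega⟩ w →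
        rowOf n k (f w).val = j' := by
      intro w hA
      exact colRho_low k a0 _ i.val hodd (by omega) ha0lt (hrowle (f w)) i.isLt hne_i
        (hcol _ w hA)
    let tIdx : Fin n → Fin (n+m+1) := fun t =>
      if t.val < m then ⟨t.val+1, by omega⟩ else ⟨t.val+m+1, by have := t.isLt; omega⟩
    have htAdj : ∀ t, (subdividedStar n m).Adj ⟨0, by omega⟩ (tIdx t) := by
      intro t
      unfold tIdx
      beta_reduce
      split_ifs with h
      · exact hadj01 (t.val+1) (by omega) (by omega) (by omega)
      · exact hadj03 (t.val+m+1) (by have := t.isLt; omega) (by omega)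
    have htVal : ∀ t : Fin n, (tIdx t).val = if t.val < m then t.val+1 else t.val+m+1 := by
      intro t
      unfold tIdx
      beta_reduce
      split_ifs <;> rfl
    have htInj : Function.Injective tIdx := by
      intro s t h
      have hv := congrArg Fin.val h
      rw [htVal s, htVal t] at hv
      apply Fin.ext
      split_ifs at hv <;> omega
    have hbounds : ∀ t : Fin n, j'*(n-1) ≤ (f (tIdx t)).val ∧
        (f (tIdx t)).val < (j'+1)*(n-1) := by
      intro t
      have h := rowOf_lt_imp n k (f (tIdx t)).val j' hn hj'lt (hnb _ (htAdj t))
      exact ⟨h.1, h.2.1⟩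
    have hexp : (j'+1)*(n-1) = j'*(n-1) + (n-1) := by ring
    let e : Fin n → Fin (n-1) := fun t =>
      ⟨(f (tIdx t)).val - j'*(n-1), by have := hbounds t; omega⟩
    have he : Function.Injective e := by
      intro s t h
      unfold e at h
      beta_reduce at h
      rw [Fin.mk.injEq] at h
      have hs := hbounds s
      have ht := hbounds t
      have : (f (tIdx s)).val = (f (tIdx t)).val := by omega
      exact htInj (f.injective (Fin.ext this))
    have hcard := Fintype.card_le_of_injective e he
    simp only [Fintype.card_fin] at hcard
    omega

end Refute

lemma isRamsey_mono {W : Type} (H : SimpleGraph W) (k : ℕ) {N M : ℕ} (hNM : N ≤ M)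
    (h : IsRamsey H k N) : IsRamsey H k M := by
  intro c
  obtain ⟨f, i, hf⟩ := h (fun e => c (e.map (Fin.castLE hNM)))
  refine ⟨f.trans (Fin.castLEEmb hNM), i, ?_⟩
  intro v w hvw
  have := hf v w hvw
  simp only [Sym2.map_pair_eq] at this
  exact this

/-- If `n ≥ 2`, `n ≥ m ≥ 1` and `k ≥ 1` is odd, then
`r(S_n^m; k) ≥ k(n−1) + m + 2`. -/
theorem stmt_12 (n m k : ℕ) (hn : 2 ≤ n) (hnm : m ≤ n) (hm : 1 ≤ m) (hk : 1 ≤ k)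
    (hodd : Odd k) :
    ramseyNumber (subdividedStar n m) k ≥ k * (n - 1) + m + 2 := by
  have hbig := isRamsey_big n m k hn hnm hm hk
  have hne : {N | IsRamsey (subdividedStar n m) k N}.Nonempty := ⟨_, hbig⟩
  rw [ramseyNumber, ge_iff_le]
  apply le_csInf hne
  intro N hN
  by_contra hlt
  push_neg at hlt
  have hNle : N ≤ k*(n-1)+m+1 := by omega
  exact not_isRamsey n m k hn hnm hm hk hodd (isRamsey_mono _ _ hNle hN)
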